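/- Define h : [0,1) → ℝ by h(p) = (3/5)·p + (2.31 − p)·(2/3 − (4/5)·ln(1/(1−p)) − (4/5)·ln(2.31 − p)). Then h is decreasing on [0,1), so for every p ∈ [0,1) one has h(p) ≤ h(0) = 2.31·(2/3 − (4/5)·ln 2.31), and moreover h(0) < 0. Consequently h(p) < 0 for all p ∈ [0,1). -/

import Mathlib

/-- The function `h(p) = (3/5)p + (2.31 - p)(2/3 - (4/5)ln(1/(1-p)) - (4/5)ln(2.31 - p))`. -/
noncomputable def hFun (p : ℝ) : ℝ :=
  (3 / 5) * p +
    (2.31 - p) *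
      (2 / 3 - (4 / 5) * Real.log (1 / (1 - p)) - (4 / 5) * Real.log (2.31 - p))

lemma hFun_hasDerivAt {p : ℝ} (h1 : p < 1) :
    HasDerivAt hFun
      (11/15 + (4/5) * (Real.log (1/(1-p)) + Real.log (2.31-p) - (2.31-p)/(1-p))) p := by
  have h2 : p < 2.31 := lt_trans h1 (by norm_num)
  have hp1 : (1:ℝ) - p ≠ 0 := by linarith
  have hp2 : (2.31:ℝ) - p ≠ 0 := by linarith
  have d1 : HasDerivAt (fun q : ℝ => 1 - q) (-1) p := by
    exact (hasDerivAt_id' p).const_sub (1:ℝ)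
  have d2 : HasDerivAt (fun q : ℝ => 2.31 - q) (-1) p := by
    exact (hasDerivAt_id' p).const_sub (2.31:ℝ)
  have dlog1 : HasDerivAt (fun q : ℝ => Real.log (1/(1-q))) (1/(1-p)) p := by
    simp only [one_div]
    have := (d1.inv hp1).log (inv_ne_zero hp1)
    convert this using 1
    · rfl
    · rw [Pi.inv_apply]
      field_simp
  have dlog2 : HasDerivAt (fun q : ℝ => Real.log (2.31-q)) (-1/(2.31-p)) p := d2.log hp2
  have dinner : HasDerivAt
      (fun q : ℝ => 2/3 - (4/5) * Real.log (1/(1-q)) - (4/5) * Real.log (2.31-q))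
      (-((4/5) * (1/(1-p))) - (4/5) * (-1/(2.31-p))) p := by
    exact (((hasDerivAt_const p ((2:ℝ)/3)).sub (dlog1.const_mul (4/5))).sub
      (dlog2.const_mul (4/5))).congr_deriv (by ring)
  have dmul := d2.mul dinner
  have dall := ((hasDerivAt_id p).const_mul ((3:ℝ)/5)).add dmul
  have heq : hFun = fun q : ℝ =>
      (3/5) * q + (2.31 - q) *
        (2/3 - (4/5) * Real.log (1/(1-q)) - (4/5) * Real.log (2.31-q)) := rfl
  rw [heq]
  refine dall.congr_deriv ?_
  have hL : Real.log (1/(1-p)) + Real.log (2.31-p) = Real.log ((2.31-p)/(1-p)) := by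
    rw [Real.log_div hp2 hp1, one_div, Real.log_inv]; ring
  field_simp
  ring

/-- `h` is decreasing on `[0,1)`, hence `h(p) ≤ h(0) = 2.31·(2/3 - (4/5)·ln 2.31)`
for all `p ∈ [0,1)`; moreover `h(0) < 0`, and consequently `h(p) < 0` on `[0,1)`. -/
theorem hFun_neg_on_Ico :
    AntitoneOn hFun (Set.Ico 0 1) ∧
    (∀ p ∈ Set.Ico (0 : ℝ) 1, hFun p ≤ hFun 0) ∧
    hFun 0 = 2.31 * (2 / 3 - (4 / 5) * Real.log 2.31) ∧
    hFun 0 < 0 ∧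
    (∀ p ∈ Set.Ico (0 : ℝ) 1, hFun p < 0) := by
  have hanti : StrictAntiOn hFun (Set.Ico 0 1) := by
    apply strictAntiOn_of_deriv_neg (convex_Ico 0 1)
    · exact fun x hx => (hFun_hasDerivAt hx.2).continuousAt.continuousWithinAt
    · intro x hx
      rw [interior_Ico] at hx
      rw [(hFun_hasDerivAt hx.2).deriv]
      have hx1 := hx.2
      have h2 : x < 2.31 := lt_trans hx.2 (by norm_num)
      have hp1 : (0:ℝ) < 1 - x := by linarith [hx.2]
      have hp2 : (0:ℝ) < 2.31 - x := by linarith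
      have hr : 0 < (2.31 - x)/(1 - x) := div_pos hp2 hp1
      have hlog := Real.log_le_sub_one_of_pos hr
      have hL : Real.log (1/(1-x)) + Real.log (2.31-x) = Real.log ((2.31-x)/(1-x)) := by
        rw [Real.log_div (ne_of_gt hp2) (ne_of_gt hp1), one_div, Real.log_inv]; ring
      rw [← hL] at hlog
      linarith
  have hanti' : AntitoneOn hFun (Set.Ico 0 1) := hanti.antitoneOn
  have hle : ∀ p ∈ Set.Ico (0 : ℝ) 1, hFun p ≤ hFun 0 := by
    intro p hp
    exact hanti' (by constructor <;> norm_num) hp hp.1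
  have h0 : hFun 0 = 2.31 * (2 / 3 - (4 / 5) * Real.log 2.31) := by
    norm_num [hFun]
  have hlog56 : (5:ℝ)/6 < Real.log 2.31 := by
    rw [Real.lt_log_iff_exp_lt (by norm_num : (0:ℝ) < 2.31)]
    have hpow : Real.exp (5/6) ^ 6 = Real.exp 1 ^ 5 := by
      rw [← Real.exp_nat_mul, ← Real.exp_nat_mul]
      norm_num
    have h9 := Real.exp_one_lt_d9
    have h5 : Real.exp 1 ^ 5 < 2.31 ^ 6 := by
      calc Real.exp 1 ^ 5 < 2.7182818286 ^ 5 :=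
            pow_lt_pow_left₀ h9 (Real.exp_pos 1).le (by norm_num)
        _ < 2.31 ^ 6 := by norm_num
    have : Real.exp (5/6) ^ 6 < 2.31 ^ 6 := by rw [hpow]; exact h5
    exact lt_of_pow_lt_pow_left₀ 6 (by norm_num) this
  have h0neg : hFun 0 < 0 := by
    rw [h0]; nlinarith [hlog56]
  refine ⟨hanti', hle, h0, h0neg, fun p hp => lt_of_le_of_lt (hle p hp) h0neg⟩
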